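/- Let r ≥ 1 and let β, γ be complex numbers with (β, γ) ≠ (0, 0). Then the pair of (3r+4)×(3r+2) complex matrices (F_r ⊕ F_{r+2} ⊕ F_{r+2}, (K_r ⊕ K_{r+2} ⊕ K_{r+2}) + β·E_{1,r} + γ·E_{1,2r+1}) is equivalent to the pair (F_{r+1} ⊕ F_{r+1} ⊕ F_{r+2}, K_{r+1} ⊕ K_{r+1} ⊕ K_{r+2}). -/

import Mathlib

open Matrix

noncomputable section

/-- The `M × N` complex matrix obtained by placing the matrix `A` with its top-left corner
at (1-based) position `(ri+1, ci+1)` (i.e. with row offset `ri` and column offset `ci`),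
with all other entries zero.  Block-diagonal direct sums of (possibly rectangular) matrices
are expressed as sums of such placements along the diagonal. -/
def place {M N m n : ℕ} (ri ci : ℕ) (A : Matrix (Fin m) (Fin n) ℂ) :
    Matrix (Fin M) (Fin N) ℂ := fun i j =>
  if hi : ri ≤ (i : ℕ) ∧ (i : ℕ) < ri + m then
    if hj : ci ≤ (j : ℕ) ∧ (j : ℕ) < ci + n then
      A ⟨(i : ℕ) - ri, by omega⟩ ⟨(j : ℕ) - ci, by omega⟩
    else 0
  else 0

/-- The `r × (r-1)` matrix `F_r` with ones on the main diagonal and zeros elsewhere. -/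
def MatF (r : ℕ) : Matrix (Fin r) (Fin (r - 1)) ℂ :=
  fun i j => if (i : ℕ) = (j : ℕ) then 1 else 0

/-- The `r × (r-1)` matrix `K_r` with ones on the subdiagonal and zeros elsewhere. -/
def MatK (r : ℕ) : Matrix (Fin r) (Fin (r - 1)) ℂ :=
  fun i j => if (i : ℕ) = (j : ℕ) + 1 then 1 else 0

/-- The matrix unit `E_{a,b}` (1-based indices): entry `(a,b)` is `1`, all others `0`. -/
def Estd {M N : ℕ} (a b : ℕ) : Matrix (Fin M) (Fin N) ℂ :=
  fun i j => if (i : ℕ) + 1 = a ∧ (j : ℕ) + 1 = b then 1 else 0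

/-- Two pairs `(A₁, A₂)` and `(B₁, B₂)` of `m × n` complex matrices are equivalent if
`B₁ = R * A₁ * S` and `B₂ = R * A₂ * S` for some invertible `R`, `S`. -/
def PairEquiv {m n : ℕ} (A₁ A₂ B₁ B₂ : Matrix (Fin m) (Fin n) ℂ) : Prop :=
  ∃ (R : Matrix (Fin m) (Fin m) ℂ) (S : Matrix (Fin n) (Fin n) ℂ),
    IsUnit R ∧ IsUnit S ∧ B₁ = R * A₁ * S ∧ B₂ = R * A₂ * S

namespace BT

/-! ### Index bookkeeping functions -/

/-- Row of the unique nonzero entry of column `j` of `B₁` (value `3r+4` = none). -/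
def psi1 (r j : ℕ) : ℕ :=
  if j < r then j else if j < 2*r then j+1 else if j ≤ 3*r then j+2 else 3*r+4

/-- Column of the unique nonzero entry of row `i` of `A₁` (value `3r+2` = none). -/
def sig1 (r i : ℕ) : ℕ :=
  if i+1 < r then i else if i+1 = r then 3*r+2 else if i ≤ 2*r then i-1
  else if i = 2*r+1 then 3*r+2 else if i ≤ 3*r+2 then i-2 else 3*r+2

/-- The column transformation matrix (entrywise, over ℕ indices). -/
def Sfun (r : ℕ) (β γ bp gp : ℂ) (i j : ℕ) : ℂ :=
  if j < r then
    (if i = r-1+j then bp else 0) + (if i = 2*r+j then gp else 0)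
      + (if 1 ≤ j ∧ i+1 = j then 1 else 0)
  else if j < 2*r then (if i = j then bp else 0) + (if i = r+1+j then gp else 0)
  else if j ≤ 3*r then (if i+r+1 = j then -γ else 0) + (if i = j then β else 0)
  else if j = 3*r+1 then (if i = j then 1 else 0)
  else 0

/-- The row transformation matrix (entrywise, over ℕ indices). -/
def Tfun (r : ℕ) (β γ bp gp : ℂ) (i j : ℕ) : ℂ :=
  if j ≤ r then
    (if i = r+j then bp else 0) + (if i = 2*r+2+j then gp else 0)
      + (if 1 ≤ j ∧ i+1 = j then 1 else 0)
  else if j ≤ 2*r+1 then (if i = j then bp else 0) + (if i = r+2+j then gp else 0)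
  else if j ≤ 3*r+3 then (if i+r+2 = j then -γ else 0) + (if i = j then β else 0)
  else 0

/-- Column of the unique nonzero entry of row `i` of the `K`-part of `A₂`. -/
def sig2 (r i : ℕ) : ℕ := if i = 0 then 3*r+2 else sig1 r (i-1)

/-- Positions/coefficients of the two nonzero entries of each column of `S⁻¹`. -/
def sA (r j : ℕ) : ℕ :=
  if j+1 < r then j+1 else if j+1 = r then 0 else if j < 2*r then j
  else if j = 2*r then 0 else if j ≤ 3*r then j-(r+1) else j

def sB (r j : ℕ) : ℕ :=
  if j+1 < r then r+j else if j+1 = r then 2*r else if j < 2*r then r+1+j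
  else if j = 2*r then 2*r else if j ≤ 3*r then j else 0

def sC (r : ℕ) (β γ bp gp : ℂ) (j : ℕ) : ℂ :=
  if j+1 < r then 1 else if j+1 = r then β else if j < 2*r then β
  else if j = 2*r then γ else if j ≤ 3*r then γ else if j = 3*r+1 then 1 else 0

def sD (r : ℕ) (β γ bp gp : ℂ) (j : ℕ) : ℂ :=
  if j+1 < r then -1 else if j+1 = r then -gp else if j < 2*r then -gp
  else if j = 2*r then bp else if j ≤ 3*r then bp else 0

/-- Positions/coefficients of the two nonzero entries of each column of `T⁻¹`. -/
def tA (r j : ℕ) : ℕ :=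
  if j < r then j+1 else if j = r then 0 else if j ≤ 2*r+1 then j
  else if j = 2*r+2 then 0 else if j ≤ 3*r+3 then j-(r+2) else j

def tB (r j : ℕ) : ℕ :=
  if j < r then r+1+j else if j = r then 2*r+2 else if j ≤ 2*r+1 then r+2+j
  else if j = 2*r+2 then 2*r+2 else if j ≤ 3*r+3 then j else 0

def tC (r : ℕ) (β γ bp gp : ℂ) (j : ℕ) : ℂ :=
  if j < r then 1 else if j = r then β else if j ≤ 2*r+1 then β
  else if j = 2*r+2 then γ else if j ≤ 3*r+3 then γ else 0

def tD (r : ℕ) (β γ bp gp : ℂ) (j : ℕ) : ℂ :=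
  if j < r then -1 else if j = r then -gp else if j ≤ 2*r+1 then -gp
  else if j = 2*r+2 then bp else if j ≤ 3*r+3 then bp else 0

/-! ### Basic bounds and vanishing lemmas -/

variable (r : ℕ) (β γ bp gp : ℂ)

lemma Tfun_big (i j : ℕ) (h : 3*r+4 ≤ j) : Tfun r β γ bp gp i j = 0 := by
  unfold Tfun; split_ifs <;> first | rfl | (exfalso; omega)

lemma Sfun_row (j : ℕ) (hj : j < 3*r+2) : Sfun r β γ bp gp (3*r+2) j = 0 := by
  unfold Sfun; split_ifs <;> first | rfl | (exfalso; omega) | norm_num | (exfalso; omega)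

lemma sig1_le (i : ℕ) : sig1 r i ≤ 3*r+2 := by
  unfold sig1; split_ifs <;> omega

lemma sA_lt (hr : 1 ≤ r) (j : ℕ) (hj : j < 3*r+2) : sA r j < 3*r+2 := by
  unfold sA; split_ifs <;> omega

lemma sB_lt (hr : 1 ≤ r) (j : ℕ) (hj : j < 3*r+2) : sB r j < 3*r+2 := by
  unfold sB; split_ifs <;> omega

lemma tA_lt (hr : 1 ≤ r) (j : ℕ) (hj : j < 3*r+4) : tA r j < 3*r+4 := by
  unfold tA; split_ifs <;> omega

lemma tB_lt (hr : 1 ≤ r) (j : ℕ) (hj : j < 3*r+4) : tB r j < 3*r+4 := by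
  unfold tB; split_ifs <;> omega

/-! ### The four key entrywise identities -/

set_option maxHeartbeats 10000000 in
lemma key1 (hr : 1 ≤ r) (i j : ℕ) (hi : i < 3*r+4) (hj : j < 3*r+2) :
    Tfun r β γ bp gp i (psi1 r j) = Sfun r β γ bp gp (sig1 r i) j := by
  unfold psi1 sig1
  split_ifs <;>
    (unfold Tfun Sfun
     repeat' (first | (exfalso; omega) | split)
     all_goals first
         | (exfalso; first | assumption | omega)
         | linear_combination (0:ℂ))

set_option maxHeartbeats 10000000 in
lemma key2a (hr : 1 ≤ r) (h1 : β * bp + γ * gp = 1) (j : ℕ) (hj : j < 3*r+2) :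
    Tfun r β γ bp gp 0 (psi1 r j + 1) =
      β * Sfun r β γ bp gp (r-1) j + γ * Sfun r β γ bp gp (2*r) j := by
  unfold psi1
  split_ifs <;>
    (unfold Tfun Sfun
     repeat' (first | (exfalso; omega) | split)
     all_goals first
         | (exfalso; first | assumption | omega)
         | linear_combination (0:ℂ)
         | linear_combination h1
         | linear_combination -h1
         | linear_combination 2*h1
         | linear_combination -2*h1)

set_option maxHeartbeats 10000000 in
lemma key2b (hr : 1 ≤ r) (i j : ℕ) (hi1 : 1 ≤ i) (hi : i < 3*r+4) (hj : j < 3*r+2) :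
    Tfun r β γ bp gp i (psi1 r j + 1) = Sfun r β γ bp gp (sig1 r (i-1)) j := by
  unfold psi1 sig1
  split_ifs <;>
    (unfold Tfun Sfun
     repeat' (first | (exfalso; omega) | split)
     all_goals first
         | (exfalso; first | assumption | omega)
         | linear_combination (0:ℂ))

set_option maxHeartbeats 10000000 in
lemma key3 (hr : 1 ≤ r) (h1 : β * bp + γ * gp = 1) (i j : ℕ)
    (hi : i < 3*r+2) (hj : j < 3*r+2) :
    Sfun r β γ bp gp i (sA r j) * sC r β γ bp gp j
      + Sfun r β γ bp gp i (sB r j) * sD r β γ bp gp j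
      = if i = j then 1 else 0 := by
  unfold sA sB sC sD
  split_ifs <;>
    (unfold Sfun
     repeat' (first | (exfalso; omega) | split)
     all_goals first
         | (exfalso; first | assumption | omega)
         | linear_combination (0:ℂ)
         | linear_combination h1
         | linear_combination -h1)

set_option maxHeartbeats 10000000 in
lemma key4 (hr : 1 ≤ r) (h1 : β * bp + γ * gp = 1) (i j : ℕ)
    (hi : i < 3*r+4) (hj : j < 3*r+4) :
    Tfun r β γ bp gp i (tA r j) * tC r β γ bp gp j
      + Tfun r β γ bp gp i (tB r j) * tD r β γ bp gp j
      = if i = j then 1 else 0 := by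
  unfold tA tB tC tD
  split_ifs <;>
    (unfold Tfun
     repeat' (first | (exfalso; omega) | split)
     all_goals first
         | (exfalso; first | assumption | omega)
         | linear_combination (0:ℂ)
         | linear_combination h1
         | linear_combination -h1)

/-! ### Entry formulas for the four pencil matrices -/

set_option maxHeartbeats 10000000 in
lemma A1_apply (hr : 1 ≤ r) (i : Fin (3*r+4)) (k : Fin (3*r+2)) :
    (place 0 0 (MatF r) + place r (r - 1) (MatF (r + 2))
        + place (2 * r + 2) (2 * r) (MatF (r + 2)) :
      Matrix (Fin (3 * r + 4)) (Fin (3 * r + 2)) ℂ) i k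
    = if (k : ℕ) = sig1 r (i : ℕ) then 1 else 0 := by
  have hi := i.isLt; have hk := k.isLt
  simp only [Matrix.add_apply, place, MatF, sig1, Fin.val_mk]
  repeat' (first | (exfalso; omega) | split)
  all_goals first | (exfalso; omega) | norm_num

set_option maxHeartbeats 10000000 in
lemma A2K_apply (hr : 1 ≤ r) (i : Fin (3*r+4)) (k : Fin (3*r+2)) :
    (place 0 0 (MatK r) : Matrix (Fin (3 * r + 4)) (Fin (3 * r + 2)) ℂ) i k
      + (place r (r - 1) (MatK (r + 2)) : Matrix (Fin (3 * r + 4)) (Fin (3 * r + 2)) ℂ) i k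
      + (place (2 * r + 2) (2 * r) (MatK (r + 2)) :
          Matrix (Fin (3 * r + 4)) (Fin (3 * r + 2)) ℂ) i k
    = if (k : ℕ) = sig2 r (i : ℕ) then 1 else 0 := by
  have hi := i.isLt; have hk := k.isLt
  simp only [place, MatK, sig2, sig1, Fin.val_mk]
  repeat' (first | (exfalso; omega) | split)
  all_goals first | (exfalso; omega) | norm_num

set_option maxHeartbeats 10000000 in
lemma A2_apply (hr : 1 ≤ r) (i : Fin (3*r+4)) (k : Fin (3*r+2)) :
    (place 0 0 (MatK r) + place r (r - 1) (MatK (r + 2))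
        + place (2 * r + 2) (2 * r) (MatK (r + 2))
        + β • Estd 1 r + γ • Estd 1 (2 * r + 1) :
      Matrix (Fin (3 * r + 4)) (Fin (3 * r + 2)) ℂ) i k
    = if (i : ℕ) = 0 then
        ((if (k : ℕ) = r-1 then β else 0) + (if (k : ℕ) = 2*r then γ else 0))
      else (if (k : ℕ) = sig1 r ((i : ℕ) - 1) then 1 else 0) := by
  have hi := i.isLt; have hk := k.isLt
  simp only [Matrix.add_apply, Matrix.smul_apply, smul_eq_mul]
  rw [A2K_apply r hr]
  simp only [Estd]
  by_cases hi0 : (i : ℕ) = 0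
  · simp only [sig2, hi0, eq_self_iff_true, if_true, true_and]
    split_ifs <;> first | (exfalso; omega) | ring
  · simp only [sig2, if_neg hi0]
    split_ifs <;> first | (exfalso; omega) | ring

set_option maxHeartbeats 10000000 in
lemma B1_apply (hr : 1 ≤ r) (k : Fin (3*r+4)) (j : Fin (3*r+2)) :
    (place 0 0 (MatF (r + 1)) + place (r + 1) r (MatF (r + 1))
        + place (2 * r + 2) (2 * r) (MatF (r + 2)) :
      Matrix (Fin (3 * r + 4)) (Fin (3 * r + 2)) ℂ) k j
    = if (k : ℕ) = psi1 r (j : ℕ) then 1 else 0 := by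
  have hk := k.isLt; have hj := j.isLt
  simp only [Matrix.add_apply, place, MatF, psi1, Fin.val_mk]
  repeat' (first | (exfalso; omega) | split)
  all_goals first | (exfalso; omega) | norm_num

set_option maxHeartbeats 10000000 in
lemma B2_apply (hr : 1 ≤ r) (k : Fin (3*r+4)) (j : Fin (3*r+2)) :
    (place 0 0 (MatK (r + 1)) + place (r + 1) r (MatK (r + 1))
        + place (2 * r + 2) (2 * r) (MatK (r + 2)) :
      Matrix (Fin (3 * r + 4)) (Fin (3 * r + 2)) ℂ) k j
    = if (k : ℕ) = psi1 r (j : ℕ) + 1 then 1 else 0 := by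
  have hk := k.isLt; have hj := j.isLt
  simp only [Matrix.add_apply, place, MatK, psi1, Fin.val_mk]
  repeat' (first | (exfalso; omega) | split)
  all_goals first | (exfalso; omega) | norm_num

/-! ### Summing against a delta -/

lemma sum_mul_delta {n : ℕ} (a : ℕ) (c : ℂ) (f : Fin n → ℂ) (g : ℕ → ℂ)
    (hfg : ∀ k : Fin n, f k = g (k : ℕ)) (hg : n ≤ a → g a = 0) :
    (∑ k : Fin n, f k * (if (k : ℕ) = a then c else 0)) = g a * c := by
  by_cases h : a < n
  · rw [Finset.sum_eq_single (⟨a, h⟩ : Fin n)]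
    · rw [hfg]; simp
    · intro b _ hb
      rw [if_neg fun hb' => hb (Fin.ext hb'), mul_zero]
    · intro hmem; exact absurd (Finset.mem_univ _) hmem
  · rw [hg (by omega), zero_mul]
    refine Finset.sum_eq_zero fun k _ => ?_
    rw [if_neg fun hk => h (lt_of_eq_of_lt hk.symm k.isLt), mul_zero]

lemma sum_delta_mul {n : ℕ} (a : ℕ) (c : ℂ) (f : Fin n → ℂ) (g : ℕ → ℂ)
    (hfg : ∀ k : Fin n, f k = g (k : ℕ)) (hg : n ≤ a → g a = 0) :
    (∑ k : Fin n, (if (k : ℕ) = a then c else 0) * f k) = c * g a := by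
  have := sum_mul_delta a c f g hfg hg
  calc (∑ k : Fin n, (if (k : ℕ) = a then c else 0) * f k)
      = ∑ k : Fin n, f k * (if (k : ℕ) = a then c else 0) := by
        exact Finset.sum_congr rfl fun k _ => mul_comm _ _
    _ = g a * c := this
    _ = c * g a := mul_comm _ _

end BT

open BT

set_option maxHeartbeats 4000000 in
theorem bif_tri_r_rp2_rp2 (r : ℕ) (hr : 1 ≤ r) (β γ : ℂ) (hβγ : (β, γ) ≠ (0, 0)) :
    PairEquiv
      (place 0 0 (MatF r) + place r (r - 1) (MatF (r + 2))
          + place (2 * r + 2) (2 * r) (MatF (r + 2)) :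
        Matrix (Fin (3 * r + 4)) (Fin (3 * r + 2)) ℂ)
      (place 0 0 (MatK r) + place r (r - 1) (MatK (r + 2))
          + place (2 * r + 2) (2 * r) (MatK (r + 2))
          + β • Estd 1 r + γ • Estd 1 (2 * r + 1))
      (place 0 0 (MatF (r + 1)) + place (r + 1) r (MatF (r + 1))
          + place (2 * r + 2) (2 * r) (MatF (r + 2)))
      (place 0 0 (MatK (r + 1)) + place (r + 1) r (MatK (r + 1))
          + place (2 * r + 2) (2 * r) (MatK (r + 2))) := by
    classical
  have hN0 : β * (starRingEnd ℂ) β + γ * (starRingEnd ℂ) γ ≠ 0 := by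
    intro h
    have h' : Complex.normSq β + Complex.normSq γ = 0 := by
      rw [Complex.mul_conj, Complex.mul_conj] at h
      exact_mod_cast h
    have hb : β = 0 := by
      rw [← Complex.normSq_eq_zero]
      have h2 := Complex.normSq_nonneg β
      have h3 := Complex.normSq_nonneg γ
      linarith
    have hg : γ = 0 := by
      rw [← Complex.normSq_eq_zero]
      have h2 := Complex.normSq_nonneg β
      have h3 := Complex.normSq_nonneg γ
      linarith
    exact hβγ (by rw [hb, hg])
  set bp : ℂ := (starRingEnd ℂ) β / (β * (starRingEnd ℂ) β + γ * (starRingEnd ℂ) γ) with hbp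
  set gp : ℂ := (starRingEnd ℂ) γ / (β * (starRingEnd ℂ) β + γ * (starRingEnd ℂ) γ) with hgp
  have h1 : β * bp + γ * gp = 1 := by
    rw [hbp, hgp, mul_div_assoc', mul_div_assoc', ← add_div, div_eq_one_iff_eq hN0]
  set S : Matrix (Fin (3*r+2)) (Fin (3*r+2)) ℂ :=
    Matrix.of (fun i j => Sfun r β γ bp gp (i:ℕ) (j:ℕ)) with hS
  set Si : Matrix (Fin (3*r+2)) (Fin (3*r+2)) ℂ :=
    Matrix.of (fun k j => (if (k:ℕ) = sA r (j:ℕ) then sC r β γ bp gp (j:ℕ) else 0)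
      + (if (k:ℕ) = sB r (j:ℕ) then sD r β γ bp gp (j:ℕ) else 0)) with hSi
  set T : Matrix (Fin (3*r+4)) (Fin (3*r+4)) ℂ :=
    Matrix.of (fun i j => Tfun r β γ bp gp (i:ℕ) (j:ℕ)) with hT
  set Ti : Matrix (Fin (3*r+4)) (Fin (3*r+4)) ℂ :=
    Matrix.of (fun k j => (if (k:ℕ) = tA r (j:ℕ) then tC r β γ bp gp (j:ℕ) else 0)
      + (if (k:ℕ) = tB r (j:ℕ) then tD r β γ bp gp (j:ℕ) else 0)) with hTi
  have hSSi : S * Si = 1 := by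
    ext i j
    rw [Matrix.mul_apply, Matrix.one_apply, hS, hSi]
    simp only [Matrix.of_apply, mul_add]
    rw [Finset.sum_add_distrib]
    have e1 : (∑ k : Fin (3*r+2), Sfun r β γ bp gp (i:ℕ) (k:ℕ) *
        (if (k:ℕ) = sA r (j:ℕ) then sC r β γ bp gp (j:ℕ) else 0))
        = Sfun r β γ bp gp (i:ℕ) (sA r (j:ℕ)) * sC r β γ bp gp (j:ℕ) :=
      sum_mul_delta _ _ _ (fun t => Sfun r β γ bp gp (i:ℕ) t) (fun k => rfl)
        (fun h => (Nat.lt_irrefl _ (lt_of_lt_of_le (sA_lt r hr _ j.isLt) h)).elim)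
    have e2 : (∑ k : Fin (3*r+2), Sfun r β γ bp gp (i:ℕ) (k:ℕ) *
        (if (k:ℕ) = sB r (j:ℕ) then sD r β γ bp gp (j:ℕ) else 0))
        = Sfun r β γ bp gp (i:ℕ) (sB r (j:ℕ)) * sD r β γ bp gp (j:ℕ) :=
      sum_mul_delta _ _ _ (fun t => Sfun r β γ bp gp (i:ℕ) t) (fun k => rfl)
        (fun h => (Nat.lt_irrefl _ (lt_of_lt_of_le (sB_lt r hr _ j.isLt) h)).elim)
    rw [e1, e2, key3 r β γ bp gp hr h1 (i:ℕ) (j:ℕ) i.isLt j.isLt]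
    by_cases hij : i = j
    · rw [if_pos (congrArg Fin.val hij), if_pos hij]
    · rw [if_neg (fun h => hij (Fin.ext h)), if_neg hij]
  have hTTi : T * Ti = 1 := by
    ext i j
    rw [Matrix.mul_apply, Matrix.one_apply, hT, hTi]
    simp only [Matrix.of_apply, mul_add]
    rw [Finset.sum_add_distrib]
    have e1 : (∑ k : Fin (3*r+4), Tfun r β γ bp gp (i:ℕ) (k:ℕ) *
        (if (k:ℕ) = tA r (j:ℕ) then tC r β γ bp gp (j:ℕ) else 0))
        = Tfun r β γ bp gp (i:ℕ) (tA r (j:ℕ)) * tC r β γ bp gp (j:ℕ) :=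
      sum_mul_delta _ _ _ (fun t => Tfun r β γ bp gp (i:ℕ) t) (fun k => rfl)
        (fun h => (Nat.lt_irrefl _ (lt_of_lt_of_le (tA_lt r hr _ j.isLt) h)).elim)
    have e2 : (∑ k : Fin (3*r+4), Tfun r β γ bp gp (i:ℕ) (k:ℕ) *
        (if (k:ℕ) = tB r (j:ℕ) then tD r β γ bp gp (j:ℕ) else 0))
        = Tfun r β γ bp gp (i:ℕ) (tB r (j:ℕ)) * tD r β γ bp gp (j:ℕ) :=
      sum_mul_delta _ _ _ (fun t => Tfun r β γ bp gp (i:ℕ) t) (fun k => rfl)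
        (fun h => (Nat.lt_irrefl _ (lt_of_lt_of_le (tB_lt r hr _ j.isLt) h)).elim)
    rw [e1, e2, key4 r β γ bp gp hr h1 (i:ℕ) (j:ℕ) i.isLt j.isLt]
    by_cases hij : i = j
    · rw [if_pos (congrArg Fin.val hij), if_pos hij]
    · rw [if_neg (fun h => hij (Fin.ext h)), if_neg hij]
  have hTB1 : T * (place 0 0 (MatF (r + 1)) + place (r + 1) r (MatF (r + 1))
          + place (2 * r + 2) (2 * r) (MatF (r + 2)) :
        Matrix (Fin (3 * r + 4)) (Fin (3 * r + 2)) ℂ)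
      = (place 0 0 (MatF r) + place r (r - 1) (MatF (r + 2))
          + place (2 * r + 2) (2 * r) (MatF (r + 2)) :
        Matrix (Fin (3 * r + 4)) (Fin (3 * r + 2)) ℂ) * S := by
    ext i j
    rw [Matrix.mul_apply, Matrix.mul_apply, hT, hS]
    simp only [Matrix.of_apply, B1_apply r hr, A1_apply r hr]
    have e1 : (∑ k : Fin (3*r+4), Tfun r β γ bp gp (i:ℕ) (k:ℕ) *
        (if (k:ℕ) = psi1 r (j:ℕ) then (1:ℂ) else 0))
        = Tfun r β γ bp gp (i:ℕ) (psi1 r (j:ℕ)) * 1 :=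
      sum_mul_delta _ _ _ (fun t => Tfun r β γ bp gp (i:ℕ) t) (fun k => rfl) (fun h => Tfun_big r β γ bp gp _ _ h)
    have e2 : (∑ k : Fin (3*r+2), (if (k:ℕ) = sig1 r (i:ℕ) then (1:ℂ) else 0) *
        Sfun r β γ bp gp (k:ℕ) (j:ℕ))
        = 1 * Sfun r β γ bp gp (sig1 r (i:ℕ)) (j:ℕ) :=
      sum_delta_mul _ _ _ (fun t => Sfun r β γ bp gp t (j:ℕ)) (fun k => rfl) (fun h => by
        have hle := sig1_le r (i:ℕ)
        have heq : sig1 r (i:ℕ) = 3*r+2 := le_antisymm hle h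
        rw [heq]
        exact Sfun_row r β γ bp gp (j:ℕ) j.isLt)
    rw [e1, e2, mul_one, one_mul]
    exact key1 r β γ bp gp hr (i:ℕ) (j:ℕ) i.isLt j.isLt
  have hTB2 : T * (place 0 0 (MatK (r + 1)) + place (r + 1) r (MatK (r + 1))
          + place (2 * r + 2) (2 * r) (MatK (r + 2)) :
        Matrix (Fin (3 * r + 4)) (Fin (3 * r + 2)) ℂ)
      = (place 0 0 (MatK r) + place r (r - 1) (MatK (r + 2))
          + place (2 * r + 2) (2 * r) (MatK (r + 2))
          + β • Estd 1 r + γ • Estd 1 (2 * r + 1) :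
        Matrix (Fin (3 * r + 4)) (Fin (3 * r + 2)) ℂ) * S := by
    ext i j
    rw [Matrix.mul_apply, Matrix.mul_apply, hT, hS]
    simp only [Matrix.of_apply, B2_apply r hr, A2_apply r β γ hr]
    have e1 : (∑ k : Fin (3*r+4), Tfun r β γ bp gp (i:ℕ) (k:ℕ) *
        (if (k:ℕ) = psi1 r (j:ℕ) + 1 then (1:ℂ) else 0))
        = Tfun r β γ bp gp (i:ℕ) (psi1 r (j:ℕ) + 1) * 1 :=
      sum_mul_delta _ _ _ (fun t => Tfun r β γ bp gp (i:ℕ) t) (fun k => rfl) (fun h => Tfun_big r β γ bp gp _ _ (by omega))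
    rw [e1, mul_one]
    by_cases hi0 : (i:ℕ) = 0
    · simp only [hi0, eq_self_iff_true, if_true, true_and]
      simp only [add_mul]
      rw [Finset.sum_add_distrib]
      have e2 : (∑ k : Fin (3*r+2), (if (k:ℕ) = r-1 then β else 0) *
          Sfun r β γ bp gp (k:ℕ) (j:ℕ)) = β * Sfun r β γ bp gp (r-1) (j:ℕ) :=
        sum_delta_mul _ _ _ (fun t => Sfun r β γ bp gp t (j:ℕ)) (fun k => rfl) (fun h => absurd h (by omega))
      have e3 : (∑ k : Fin (3*r+2), (if (k:ℕ) = 2*r then γ else 0) *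
          Sfun r β γ bp gp (k:ℕ) (j:ℕ)) = γ * Sfun r β γ bp gp (2*r) (j:ℕ) :=
        sum_delta_mul _ _ _ (fun t => Sfun r β γ bp gp t (j:ℕ)) (fun k => rfl) (fun h => absurd h (by omega))
      rw [e2, e3]
      exact key2a r β γ bp gp hr h1 (j:ℕ) j.isLt
    · simp only [if_neg hi0]
      have e2 : (∑ k : Fin (3*r+2), (if (k:ℕ) = sig1 r ((i:ℕ)-1) then (1:ℂ) else 0) *
          Sfun r β γ bp gp (k:ℕ) (j:ℕ))
          = 1 * Sfun r β γ bp gp (sig1 r ((i:ℕ)-1)) (j:ℕ) :=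
        sum_delta_mul _ _ _ (fun t => Sfun r β γ bp gp t (j:ℕ)) (fun k => rfl) (fun h => by
          have hle := sig1_le r ((i:ℕ)-1)
          have heq : sig1 r ((i:ℕ)-1) = 3*r+2 := le_antisymm hle h
          rw [heq]
          exact Sfun_row r β γ bp gp (j:ℕ) j.isLt)
      rw [e2, one_mul]
      exact key2b r β γ bp gp hr (i:ℕ) (j:ℕ) (by omega) i.isLt j.isLt
  haveI : Invertible S := invertibleOfRightInverse _ _ hSSi
  have hTiT : Ti * T = 1 := mul_eq_one_comm.mp hTTi
  haveI : Invertible Ti := invertibleOfRightInverse _ _ hTiT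
  refine ⟨Ti, S, isUnit_of_invertible Ti, isUnit_of_invertible S, ?_, ?_⟩
  · have h2 : Ti * (T * (place 0 0 (MatF (r + 1)) + place (r + 1) r (MatF (r + 1))
          + place (2 * r + 2) (2 * r) (MatF (r + 2)) :
        Matrix (Fin (3 * r + 4)) (Fin (3 * r + 2)) ℂ))
        = Ti * ((place 0 0 (MatF r) + place r (r - 1) (MatF (r + 2))
          + place (2 * r + 2) (2 * r) (MatF (r + 2)) :
        Matrix (Fin (3 * r + 4)) (Fin (3 * r + 2)) ℂ) * S) := by rw [hTB1]
    rw [← Matrix.mul_assoc, hTiT, Matrix.one_mul, ← Matrix.mul_assoc] at h2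
    exact h2
  · have h2 : Ti * (T * (place 0 0 (MatK (r + 1)) + place (r + 1) r (MatK (r + 1))
          + place (2 * r + 2) (2 * r) (MatK (r + 2)) :
        Matrix (Fin (3 * r + 4)) (Fin (3 * r + 2)) ℂ))
        = Ti * ((place 0 0 (MatK r) + place r (r - 1) (MatK (r + 2))
          + place (2 * r + 2) (2 * r) (MatK (r + 2))
          + β • Estd 1 r + γ • Estd 1 (2 * r + 1) :
        Matrix (Fin (3 * r + 4)) (Fin (3 * r + 2)) ℂ) * S) := by rw [hTB2]
    rw [← Matrix.mul_assoc, hTiT, Matrix.one_mul, ← Matrix.mul_assoc] at h2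
    exact h2
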